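/- Let G be a graph with a linear order on its vertices. Say v dominates w (for distinct v, w) if N(v)\{w} strictly contains N(w)\{v}, or N(v)\{w} = N(w)\{v} and v > w. Then for a connected graph G there exists an elimination tree of G of depth equal to the treedepth of G in which no vertex dominates any of its ancestors. -/

import Mathlib

open scoped Classical

/-- `nbhd G S` is the set `N(S)` of vertices outside `S` adjacent to some vertex of `S`. -/
def nbhd {V : Type*} (G : SimpleGraph V) (S : Set V) : Set V :=
  {u | u ∉ S ∧ ∃ s ∈ S, G.Adj u s}

/-- `compOf G A c` is the vertex set of the connected component of `c` in `G[A]`. -/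
def compOf {V : Type*} (G : SimpleGraph V) (A : Set V) (c : V) : Set V :=
  {x | ∃ (hx : x ∈ A) (hc : c ∈ A), (G.induce A).Reachable ⟨x, hx⟩ ⟨c, hc⟩}

/-- `IsElimTree G S r anc` : `anc` is the (reflexive) ancestor relation of an
elimination tree of `G[S]` with root `r`, following the recursive definition:
a one-vertex graph is its own elimination tree; otherwise the root `r` is made
the parent of the roots of elimination trees of the components of `G[S] - r`. -/
inductive IsElimTree {V : Type*} (G : SimpleGraph V) : Set V → V → (V → V → Prop) → Prop where
  | single (v : V) : IsElimTree G {v} v (fun a b => a = v ∧ b = v)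
  | node (S : Set V) (r : V) (hr : r ∈ S) (hS : S ≠ {r})
      (root : V → V) (sub : V → V → V → Prop)
      (hsub : ∀ c ∈ S \ {r}, IsElimTree G (compOf G (S \ {r}) c) (root c) (sub c))
      (hcong : ∀ c ∈ S \ {r}, ∀ c' ∈ S \ {r},
        compOf G (S \ {r}) c = compOf G (S \ {r}) c' → root c = root c' ∧ sub c = sub c')
      (anc : V → V → Prop)
      (hanc : ∀ a b, anc a b ↔ (a = r ∧ b ∈ S) ∨ ∃ c ∈ S \ {r}, sub c a b) :
      IsElimTree G S r anc

/-- The depth (maximum number of vertices on a root-to-leaf path) of a rooted forest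
on vertex set `S`, given by its reflexive ancestor relation `anc`. -/
noncomputable def ancDepth {V : Type*} (anc : V → V → Prop) (S : Set V) : ℕ :=
  sSup ((fun b => Set.ncard {a | anc a b}) '' S)

/-- A treedepth decomposition of `G`: a rooted forest on the vertex set of `G`
(given by its reflexive ancestor partial order, in which the set of ancestors of any
vertex is a chain) such that every edge of `G` joins an ancestor-descendant pair. -/
structure TDDecomp {V : Type*} (G : SimpleGraph V) where
  anc : V → V → Prop
  refl : ∀ v, anc v v
  trans : ∀ a b c, anc a b → anc b c → anc a c
  antisymm : ∀ a b, anc a b → anc b a → a = b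
  chain : ∀ a b v, anc a v → anc b v → anc a b ∨ anc b a
  covers : ∀ u v, G.Adj u v → anc u v ∨ anc v u

/-- Depth of a treedepth decomposition. -/
noncomputable def TDDecomp.depth {V : Type*} {G : SimpleGraph V} (F : TDDecomp G) : ℕ :=
  ancDepth F.anc Set.univ

/-- Treedepth of `G`: minimum depth of a treedepth decomposition of `G`. -/
noncomputable def treedepth {V : Type*} (G : SimpleGraph V) : ℕ :=
  sInf {d | ∃ F : TDDecomp G, F.depth = d}

/-- `v` dominates `w`. -/
def Dominates {V : Type*} [LinearOrder V] (G : SimpleGraph V) (v w : V) : Prop :=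
  v ≠ w ∧ ((G.neighborSet w \ {v}) ⊂ (G.neighborSet v \ {w}) ∨
    (G.neighborSet v \ {w} = G.neighborSet w \ {v} ∧ w < v))

/-- The score of an elimination tree (given by its ancestor relation `anc`):
the lexicographically least pair `(depth of u, u)` over vertices `u` dominated by
one of their descendants, and `⊤ = (∞,∞)` if no such vertex exists. -/
noncomputable def score {V : Type*} [Fintype V] [LinearOrder V] (G : SimpleGraph V)
    (anc : V → V → Prop) : WithTop (Lex (ℕ × V)) :=
  Finset.min ((Finset.univ.filter
      (fun u => ∃ w, anc u w ∧ Dominates G w u)).image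
    (fun u => toLex (Set.ncard {a | anc a u}, u)))
open SimpleGraph

set_option linter.unusedSectionVars false
set_option linter.unusedVariables false

section CompOf
variable {V : Type*} {G : SimpleGraph V} {A : Set V} {c x y : V}

lemma compOf_subset : compOf G A c ⊆ A := fun _ ⟨hx, _, _⟩ => hx

lemma mem_compOf_self (hc : c ∈ A) : c ∈ compOf G A c := ⟨hc, hc, .refl _⟩

lemma compOf_eq_of_mem (hx : x ∈ compOf G A c) : compOf G A x = compOf G A c := by
  obtain ⟨hx, hc, hreach⟩ := hx
  ext z
  constructor
  · rintro ⟨hz, _, hr⟩; exact ⟨hz, hc, hr.trans hreach⟩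
  · rintro ⟨hz, _, hr⟩; exact ⟨hz, hx, hr.trans hreach.symm⟩

lemma mem_compOf_of_adj (hx : x ∈ A) (hy : y ∈ A) (hadj : G.Adj x y) :
    x ∈ compOf G A y := ⟨hx, hy, SimpleGraph.Adj.reachable (by exact hadj)⟩

lemma compOf_eq_of_adj (hx : x ∈ A) (hy : y ∈ A) (hadj : G.Adj x y) :
    compOf G A x = compOf G A y := compOf_eq_of_mem (mem_compOf_of_adj hx hy hadj)

lemma reachable_in_compOf (hx : x ∈ compOf G A c) (hy : y ∈ compOf G A c) :
    (G.induce (compOf G A c)).Reachable ⟨x, hx⟩ ⟨y, hy⟩ := by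
  have hcA : c ∈ A := hx.2.1
  have key : ∀ (p d : A) (w : (G.induce A).Walk p d) (hp : p.val ∈ compOf G A c)
      (hd : d.val ∈ compOf G A c),
      (G.induce (compOf G A c)).Reachable ⟨p.val, hp⟩ ⟨d.val, hd⟩ := by
    intro p d w
    induction w with
    | nil => intro hp hd; rfl
    | @cons u q _ h w' ih =>
        intro hp hd
        have hq : q.val ∈ compOf G A c := ⟨q.2, hd.2.1, Reachable.trans ⟨w'⟩ hd.2.2⟩
        have hadj : (G.induce (compOf G A c)).Adj ⟨u.val, hp⟩ ⟨q.val, hq⟩ := by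
          simp only [comap_adj, Function.Embedding.coe_subtype] at h ⊢
          exact h
        exact hadj.reachable.trans (ih hq hd)
  obtain ⟨hxA, _, hrx⟩ := hx
  obtain ⟨hyA, _, hry⟩ := hy
  obtain ⟨wx⟩ := hrx
  obtain ⟨wy⟩ := hry
  exact (key ⟨x, hxA⟩ _ wx _ (mem_compOf_self hcA)).trans
    (key ⟨y, hyA⟩ _ wy _ (mem_compOf_self hcA)).symm

end CompOf

section Decomp
variable {V : Type*} [Fintype V] [LinearOrder V] {G : SimpleGraph V}

lemma ncard_le_card (s : Set V) : s.ncard ≤ Fintype.card V := by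
  have := Set.ncard_le_ncard (Set.subset_univ s) (Set.finite_univ)
  rwa [Set.ncard_univ, Nat.card_eq_fintype_card] at this

lemma ancDepth_le {anc : V → V → Prop} {S : Set V} {k : ℕ}
    (h : ∀ b ∈ S, Set.ncard {a | anc a b} ≤ k) : ancDepth anc S ≤ k := by
  apply csSup_le'
  rintro d ⟨b, hb, rfl⟩
  exact h b hb

lemma le_ancDepth {anc : V → V → Prop} {S : Set V} {b : V} (hb : b ∈ S) :
    Set.ncard {a | anc a b} ≤ ancDepth anc S := by
  apply le_csSup
  · exact ⟨Fintype.card V, by rintro d ⟨x, hx, rfl⟩; exact ncard_le_card _⟩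
  · exact ⟨b, hb, rfl⟩

lemma one_le_ancDepth {anc : V → V → Prop} {S : Set V} {b : V} (hb : b ∈ S)
    (hrefl : anc b b) : 1 ≤ ancDepth anc S := by
  refine le_trans ?_ (le_ancDepth hb)
  have : ({a | anc a b} : Set V).Nonempty := ⟨b, hrefl⟩
  have := this.ne_empty
  rw [Nat.one_le_iff_ne_zero, Ne, Set.ncard_eq_zero (Set.toFinite _)]
  exact this

/-- A treedepth decomposition of `G[S]`. -/
structure IsDecomp (G : SimpleGraph V) (S : Set V) (anc : V → V → Prop) : Prop where
  mem : ∀ a b, anc a b → a ∈ S ∧ b ∈ S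
  refl : ∀ v ∈ S, anc v v
  trans : ∀ a b c, anc a b → anc b c → anc a c
  antisymm : ∀ a b, anc a b → anc b a → a = b
  chain : ∀ a b v, anc a v → anc b v → anc a b ∨ anc b a
  covers : ∀ u v, u ∈ S → v ∈ S → G.Adj u v → anc u v ∨ anc v u

/-- treedepth of `G[S]` via decompositions. -/
noncomputable def td (G : SimpleGraph V) (S : Set V) : ℕ :=
  sInf {d | ∃ anc, IsDecomp G S anc ∧ ancDepth anc S = d}

lemma decompSet_nonempty (S : Set V) :
    {d | ∃ anc, IsDecomp G S anc ∧ ancDepth anc S = d}.Nonempty := by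
  refine ⟨_, fun a b => a ∈ S ∧ b ∈ S ∧ a ≤ b, ?_, rfl⟩
  constructor
  · exact fun a b h => ⟨h.1, h.2.1⟩
  · exact fun v hv => ⟨hv, hv, le_refl v⟩
  · rintro a b c ⟨ha, hb, hab⟩ ⟨_, hc, hbc⟩; exact ⟨ha, hc, hab.trans hbc⟩
  · rintro a b ⟨_, _, hab⟩ ⟨_, _, hba⟩; exact le_antisymm hab hba
  · rintro a b v ⟨ha, _, _⟩ ⟨hb, _, _⟩
    rcases le_total a b with h | h
    · exact Or.inl ⟨ha, hb, h⟩
    · exact Or.inr ⟨hb, ha, h⟩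
  · intro u v hu hv _
    rcases le_total u v with h | h
    · exact Or.inl ⟨hu, hv, h⟩
    · exact Or.inr ⟨hv, hu, h⟩

lemma exists_min_decomp (S : Set V) :
    ∃ anc, IsDecomp G S anc ∧ ancDepth anc S = td G S := by
  have := Nat.sInf_mem (decompSet_nonempty (G := G) S)
  obtain ⟨anc, h1, h2⟩ := this
  exact ⟨anc, h1, h2⟩

lemma td_le {anc : V → V → Prop} {S : Set V} (h : IsDecomp G S anc) :
    td G S ≤ ancDepth anc S := Nat.sInf_le ⟨anc, h, rfl⟩

lemma one_le_td {S : Set V} (hS : S.Nonempty) : 1 ≤ td G S := by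
  obtain ⟨anc, hD, hd⟩ := exists_min_decomp (G := G) S
  obtain ⟨b, hb⟩ := hS
  rw [← hd]
  exact one_le_ancDepth hb (hD.refl b hb)

end Decomp

set_option linter.unusedSectionVars false
set_option linter.unusedVariables false

section ElimDecomp
variable {V : Type*} [Fintype V] [LinearOrder V] {G : SimpleGraph V}

lemma IsElimTree.isDecomp {S : Set V} {r : V} {anc : V → V → Prop}
    (h : IsElimTree G S r anc) :
    IsDecomp G S anc ∧ r ∈ S ∧ ∀ b ∈ S, anc r b := by
  induction h with
  | single v =>
      refine ⟨⟨?_, ?_, ?_, ?_, ?_, ?_⟩, rfl, ?_⟩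
      · rintro a b ⟨rfl, rfl⟩; exact ⟨rfl, rfl⟩
      · rintro a rfl; exact ⟨rfl, rfl⟩
      · rintro a b c ⟨rfl, _⟩ ⟨_, rfl⟩; exact ⟨rfl, rfl⟩
      · rintro a b ⟨rfl, _⟩ ⟨rfl, _⟩; rfl
      · rintro a b x ⟨rfl, _⟩ ⟨rfl, _⟩; exact Or.inl ⟨rfl, rfl⟩
      · rintro u v rfl rfl hadj; exact absurd rfl hadj.ne
      · rintro b rfl; exact ⟨rfl, rfl⟩
  | node S r hr hS root sub hsub hcong anc hanc IH =>
      set A := S \ {r} with hA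
      have subm : ∀ c ∈ A, ∀ a b, sub c a b → a ∈ compOf G A c ∧ b ∈ compOf G A c :=
        fun c hc a b hab => (IH c hc).1.mem a b hab
      have sameSub : ∀ c ∈ A, ∀ c' ∈ A, ∀ b, b ∈ compOf G A c → b ∈ compOf G A c' →
          sub c = sub c' := by
        intro c hc c' hc' b hb hb'
        exact (hcong c hc c' hc'
          ((compOf_eq_of_mem hb).symm.trans (compOf_eq_of_mem hb'))).2
      refine ⟨⟨?_, ?_, ?_, ?_, ?_, ?_⟩, hr, ?_⟩
      · -- mem
        intro a b hab
        rcases (hanc a b).mp hab with ⟨rfl, hb⟩ | ⟨c, hc, hab⟩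
        · exact ⟨hr, hb⟩
        · obtain ⟨ha, hb⟩ := subm c hc a b hab
          exact ⟨(compOf_subset ha).1, (compOf_subset hb).1⟩
      · -- refl
        intro v hv
        by_cases hvr : v = r
        · exact (hanc v v).mpr (Or.inl ⟨hvr, hv⟩)
        · have hvA : v ∈ A := ⟨hv, hvr⟩
          exact (hanc v v).mpr (Or.inr ⟨v, hvA,
            (IH v hvA).1.refl v (mem_compOf_self hvA)⟩)
      · -- trans
        intro a b c hab hbc
        rcases (hanc a b).mp hab with ⟨rfl, _⟩ | ⟨c₀, hc₀, hab'⟩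
        · rcases (hanc b c).mp hbc with ⟨_, hc⟩ | ⟨c₁, hc₁, hbc'⟩
          · exact (hanc a c).mpr (Or.inl ⟨rfl, hc⟩)
          · exact (hanc a c).mpr (Or.inl ⟨rfl,
              (compOf_subset ((subm c₁ hc₁ _ _ hbc').2)).1⟩)
        · have hbmem := (subm c₀ hc₀ _ _ hab').2
          have hbA : b ∈ A := compOf_subset hbmem
          rcases (hanc b c).mp hbc with ⟨rfl, _⟩ | ⟨c₁, hc₁, hbc'⟩
          · exact absurd rfl hbA.2
          · have := sameSub c₀ hc₀ c₁ hc₁ b hbmem (subm c₁ hc₁ _ _ hbc').1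
            exact (hanc a c).mpr (Or.inr ⟨c₀, hc₀,
              (IH c₀ hc₀).1.trans a b c hab' (this ▸ hbc')⟩)
      · -- antisymm
        intro a b hab hba
        rcases (hanc a b).mp hab with ⟨rfl, _⟩ | ⟨c₀, hc₀, hab'⟩
        · rcases (hanc b a).mp hba with ⟨rfl, _⟩ | ⟨c₁, hc₁, hba'⟩
          · rfl
          · exact absurd (compOf_subset ((subm c₁ hc₁ _ _ hba').2)).2 (by simp)
        · have hbA : b ∈ A := compOf_subset (subm c₀ hc₀ _ _ hab').2
          rcases (hanc b a).mp hba with ⟨rfl, _⟩ | ⟨c₁, hc₁, hba'⟩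
          · exact absurd rfl hbA.2
          · have := sameSub c₀ hc₀ c₁ hc₁ b (subm c₀ hc₀ _ _ hab').2
              (subm c₁ hc₁ _ _ hba').1
            exact (IH c₀ hc₀).1.antisymm a b hab' (this ▸ hba')
      · -- chain
        intro a b v hav hbv
        rcases (hanc a v).mp hav with ⟨rfl, _⟩ | ⟨c₀, hc₀, hav'⟩
        · exact Or.inl ((hanc a b).mpr (Or.inl ⟨rfl,
            ((by
              rcases (hanc b v).mp hbv with ⟨rfl, _⟩ | ⟨c₁, hc₁, hbv'⟩
              · exact hr
              · exact (compOf_subset (subm c₁ hc₁ _ _ hbv').1).1))⟩))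
        · rcases (hanc b v).mp hbv with ⟨rfl, _⟩ | ⟨c₁, hc₁, hbv'⟩
          · exact Or.inr ((hanc b a).mpr (Or.inl ⟨rfl,
              (compOf_subset (subm c₀ hc₀ _ _ hav').1).1⟩))
          · have := sameSub c₀ hc₀ c₁ hc₁ v (subm c₀ hc₀ _ _ hav').2
              (subm c₁ hc₁ _ _ hbv').2
            rcases (IH c₀ hc₀).1.chain a b v hav' (this ▸ hbv') with h | h
            · exact Or.inl ((hanc a b).mpr (Or.inr ⟨c₀, hc₀, h⟩))
            · exact Or.inr ((hanc b a).mpr (Or.inr ⟨c₀, hc₀, h⟩))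
      · -- covers
        intro u v hu hv hadj
        by_cases hur : u = r
        · exact Or.inl ((hanc u v).mpr (Or.inl ⟨hur, hv⟩))
        by_cases hvr : v = r
        · exact Or.inr ((hanc v u).mpr (Or.inl ⟨hvr, hu⟩))
        have huA : u ∈ A := ⟨hu, hur⟩
        have hvA : v ∈ A := ⟨hv, hvr⟩
        have humem : u ∈ compOf G A u := mem_compOf_self huA
        have hvmem : v ∈ compOf G A u := mem_compOf_of_adj hvA huA hadj.symm
        rcases (IH u huA).1.covers u v humem hvmem hadj with h | h
        · exact Or.inl ((hanc u v).mpr (Or.inr ⟨u, huA, h⟩))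
        · exact Or.inr ((hanc v u).mpr (Or.inr ⟨u, huA, h⟩))
      · -- root ancestor of all
        intro b hb
        exact (hanc r b).mpr (Or.inl ⟨rfl, hb⟩)

end ElimDecomp

section Roots
variable {V : Type*} [Fintype V] [LinearOrder V] {G : SimpleGraph V}

/-- a finite nonempty chain has a least element -/
lemma chain_least {anc : V → V → Prop}
    (htrans : ∀ a b c, anc a b → anc b c → anc a c)
    (T : Set V) (hne : T.Nonempty)
    (hch : ∀ a ∈ T, ∀ b ∈ T, anc a b ∨ anc b a) :
    ∃ m ∈ T, ∀ x ∈ T, anc m x := by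
  have key : ∀ (s : Finset V), s.Nonempty → (∀ a ∈ s, ∀ b ∈ s, anc a b ∨ anc b a) →
      ∃ m ∈ s, ∀ x ∈ s, anc m x := by
    intro s
    induction s using Finset.cons_induction with
    | empty => intro hs _; exact absurd hs (by simp)
    | cons a s ha ih =>
        intro _ hch'
        simp only [Finset.cons_eq_insert] at hch' ⊢
        have haa : anc a a := (hch' a (by simp) a (by simp)).elim id id
        rcases s.eq_empty_or_nonempty with rfl | hsne
        · refine ⟨a, by simp, ?_⟩
          intro x hx
          simp only [Finset.mem_insert, Finset.notMem_empty, or_false] at hx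
          subst hx
          exact haa
        · obtain ⟨m, hm, hleast⟩ := ih hsne
            (fun x hx y hy => hch' x (by simp [hx]) y (by simp [hy]))
          rcases hch' a (by simp) m (by simp [hm]) with h | h
          · refine ⟨a, by simp, ?_⟩
            intro x hx
            rcases Finset.mem_insert.mp hx with rfl | hx
            · exact haa
            · exact htrans _ _ _ h (hleast x hx)
          · refine ⟨m, by simp [hm], ?_⟩
            intro x hx
            rcases Finset.mem_insert.mp hx with rfl | hx
            · exact h
            · exact hleast x hx
  have := key (Set.toFinite T).toFinset (by simpa [Set.Finite.toFinset] using hne)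
    (by intro a ha b hb
        exact hch a (by simpa using ha) b (by simpa using hb))
  obtain ⟨m, hm, hl⟩ := this
  exact ⟨m, by simpa using hm, fun x hx => hl x (by simpa using hx)⟩

/-- a decomposition of a connected set has a root. -/
lemma decomp_root {S : Set V} {anc : V → V → Prop} (hD : IsDecomp G S anc)
    (hne : S.Nonempty)
    (hconn : ∀ x (hx : x ∈ S) y (hy : y ∈ S), (G.induce S).Reachable ⟨x, hx⟩ ⟨y, hy⟩) :
    ∃ rt ∈ S, ∀ b ∈ S, anc rt b := by
  classical
  have hCh : ∀ b ∈ S, ∃ m, m ∈ {a | anc a b} ∧ ∀ x ∈ {a | anc a b}, anc m x := by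
    intro b hb
    exact chain_least hD.trans _ ⟨b, hD.refl b hb⟩
      (fun a ha a' ha' => hD.chain a a' b ha ha')
  have hm : ∀ b, ∃ m, b ∈ S → (anc m b ∧ ∀ x, anc x b → anc m x) := by
    intro b
    by_cases hb : b ∈ S
    · obtain ⟨m, hm1, hm2⟩ := hCh b hb
      exact ⟨m, fun _ => ⟨hm1, fun x hx => hm2 x hx⟩⟩
    · exact ⟨b, fun h => absurd h hb⟩
  choose m hmspec using hm
  -- least elements are equal along anc
  have step : ∀ x ∈ S, ∀ y ∈ S, anc x y → m x = m y := by
    intro x hx y hy hxy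
    obtain ⟨hx1, hx2⟩ := hmspec x hx
    obtain ⟨hy1, hy2⟩ := hmspec y hy
    have hmxy : anc (m x) y := hD.trans _ _ _ hx1 hxy
    have h1 : anc (m y) (m x) := hy2 _ hmxy
    have h2 : anc (m x) (m y) := hx2 _ (hD.trans _ _ _ h1 hx1)
    exact hD.antisymm _ _ h2 h1
  have stepAdj : ∀ x ∈ S, ∀ y ∈ S, G.Adj x y → m x = m y := by
    intro x hx y hy hadj
    rcases hD.covers x y hx hy hadj with h | h
    · exact step x hx y hy h
    · exact (step y hy x hx h).symm
  obtain ⟨b₀, hb₀⟩ := hne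
  have hwalk : ∀ (p q : S) (w : (G.induce S).Walk p q), m p.val = m q.val := by
    intro p q w
    induction w with
    | nil => rfl
    | @cons u q' _ h w' ih =>
        have : G.Adj u.val q'.val := by
          simpa only [SimpleGraph.comap_adj, Function.Embedding.coe_subtype] using h
        exact (stepAdj u.val u.2 q'.val q'.2 this).trans ih
  refine ⟨m b₀, ?_, ?_⟩
  · exact (hD.mem _ _ (hmspec b₀ hb₀).1).1
  · intro b hb
    obtain ⟨w⟩ := hconn b hb b₀ hb₀
    have := hwalk ⟨b, hb⟩ ⟨b₀, hb₀⟩ w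
    exact this ▸ (hmspec b hb).1

/-- restriction of a rooted decomposition to a component of `S - rt`. -/
lemma restrict_decomp {S : Set V} {anc : V → V → Prop} (hD : IsDecomp G S anc)
    {rt : V} (hroot : ∀ b ∈ S, anc rt b) {c : V} (hc : c ∈ S \ {rt}) :
    td G (compOf G (S \ {rt}) c) + 1 ≤ ancDepth anc S := by
  set C := compOf G (S \ {rt}) c with hC
  have hCsub : C ⊆ S \ {rt} := compOf_subset
  have hCS : C ⊆ S := fun x hx => (hCsub hx).1
  set anc' : V → V → Prop := fun a b => anc a b ∧ a ∈ C ∧ b ∈ C with hanc'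
  have hD' : IsDecomp G C anc' := by
    constructor
    · exact fun a b h => ⟨h.2.1, h.2.2⟩
    · exact fun v hv => ⟨hD.refl v (hCS hv), hv, hv⟩
    · rintro a b c' ⟨h1, ha, _⟩ ⟨h2, _, hc'⟩; exact ⟨hD.trans _ _ _ h1 h2, ha, hc'⟩
    · rintro a b ⟨h1, _, _⟩ ⟨h2, _, _⟩; exact hD.antisymm _ _ h1 h2
    · rintro a b v ⟨h1, ha, _⟩ ⟨h2, hb, _⟩
      rcases hD.chain a b v h1 h2 with h | h
      · exact Or.inl ⟨h, ha, hb⟩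
      · exact Or.inr ⟨h, hb, ha⟩
    · intro x y hx hy hadj
      rcases hD.covers x y (hCS hx) (hCS hy) hadj with h | h
      · exact Or.inl ⟨h, hx, hy⟩
      · exact Or.inr ⟨h, hy, hx⟩
  have hdepth : ancDepth anc' C + 1 ≤ ancDepth anc S := by
    rcases Set.eq_empty_or_nonempty C with hCe | ⟨b₀, hb₀⟩
    · have : ancDepth anc' C = 0 := by
        rw [hCe]
        simp [ancDepth]
      rw [this]
      exact one_le_ancDepth (hCS (mem_compOf_self hc)) (hD.refl c (hCS (mem_compOf_self hc)))
    · have h1 : ∀ b ∈ C, Set.ncard {a | anc' a b} + 1 ≤ ancDepth anc S := by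
        intro b hb
        have hsub : {a | anc' a b} ⊆ {a | anc a b} \ {rt} := by
          rintro a ⟨h1, ha, _⟩
          exact ⟨h1, fun hr => (hCsub ha).2 hr⟩
        have hrtmem : rt ∈ {a | anc a b} := hroot b (hCS hb)
        have h2 : Set.ncard {a | anc' a b} ≤ Set.ncard ({a | anc a b} \ {rt}) :=
          Set.ncard_le_ncard hsub (Set.toFinite _)
        have h3 : Set.ncard ({a | anc a b} \ {rt}) + 1 = Set.ncard {a | anc a b} :=
          Set.ncard_diff_singleton_add_one hrtmem (Set.toFinite _)
        have h4 := le_ancDepth (anc := anc) (S := S) (hCS hb)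
        omega
      have hd1 : 1 ≤ ancDepth anc S :=
        one_le_ancDepth (hCS hb₀) (hD.refl b₀ (hCS hb₀))
      have h2 : ancDepth anc' C ≤ ancDepth anc S - 1 := by
        apply csSup_le'
        rintro d ⟨b, hb, rfl⟩
        have := h1 b hb
        show Set.ncard {a | anc' a b} ≤ ancDepth anc S - 1
        omega
      omega
  calc td G C + 1 ≤ ancDepth anc' C + 1 := by
        have := td_le hD'
        omega
    _ ≤ ancDepth anc S := hdepth

def OptRoot (G : SimpleGraph V) (S : Set V) (r : V) : Prop :=
  r ∈ S ∧ ∀ c ∈ S \ {r}, td G (compOf G (S \ {r}) c) + 1 ≤ td G S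

lemma exists_optRoot {S : Set V} (hne : S.Nonempty)
    (hconn : ∀ x (hx : x ∈ S) y (hy : y ∈ S), (G.induce S).Reachable ⟨x, hx⟩ ⟨y, hy⟩) :
    ∃ r, OptRoot G S r := by
  obtain ⟨anc, hD, hd⟩ := exists_min_decomp (G := G) S
  obtain ⟨rt, hrt, hroot⟩ := decomp_root hD hne hconn
  refine ⟨rt, hrt, ?_⟩
  intro c hc
  have := restrict_decomp hD hroot hc
  omega

end Roots

section Swap
variable {V : Type*} [Fintype V] [LinearOrder V] {G : SimpleGraph V}

lemma dominates_subset {v w : V} (h : Dominates G v w) :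
    G.neighborSet w \ {v} ⊆ G.neighborSet v \ {w} := by
  rcases h.2 with h' | h'
  · exact h'.subset
  · exact h'.1.symm.subset

/-- from an optimal root build a decomposition of optimal depth rooted at it. -/
lemma optRoot_decomp {S : Set V} {u : V} (hu : OptRoot G S u) :
    ∃ anc, IsDecomp G S anc ∧ ancDepth anc S ≤ td G S ∧ ∀ b ∈ S, anc u b := by
  classical
  obtain ⟨huS, hopt⟩ := hu
  set A := S \ {u} with hA
  set Dm : Set V → (V → V → Prop) := fun C => (exists_min_decomp (G := G) C).choose with hDm
  have Dspec : ∀ C : Set V, IsDecomp G C (Dm C) ∧ ancDepth (Dm C) C = td G C :=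
    fun C => (exists_min_decomp (G := G) C).choose_spec
  set anc : V → V → Prop :=
    fun a b => (a = u ∧ b ∈ S) ∨ (b ∈ A ∧ Dm (compOf G A b) a b) with hanc
  have Dmem : ∀ b ∈ A, ∀ a x, Dm (compOf G A b) a x →
      a ∈ compOf G A b ∧ x ∈ compOf G A b :=
    fun b _ a x h => (Dspec (compOf G A b)).1.mem a x h
  have hsubS : ∀ {x}, x ∈ A → x ∈ S := fun hx => hx.1
  have hcompS : ∀ {b x : V}, b ∈ A → x ∈ compOf G A b → x ∈ S :=
    fun hb hx => (compOf_subset hx).1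
  refine ⟨anc, ⟨?_, ?_, ?_, ?_, ?_, ?_⟩, ?_, ?_⟩
  · -- mem
    rintro a b (⟨rfl, hb⟩ | ⟨hb, h⟩)
    · exact ⟨huS, hb⟩
    · exact ⟨hcompS hb (Dmem b hb a b h).1, hsubS hb⟩
  · -- refl
    intro v hv
    by_cases hvu : v = u
    · exact Or.inl ⟨hvu, hv⟩
    · have hvA : v ∈ A := ⟨hv, hvu⟩
      exact Or.inr ⟨hvA, (Dspec _).1.refl v (mem_compOf_self hvA)⟩
  · -- trans
    rintro a b c (⟨rfl, hb⟩ | ⟨hb, hab⟩) hbc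
    · rcases hbc with ⟨rfl, hc⟩ | ⟨hc, hbc⟩
      · exact Or.inl ⟨rfl, hc⟩
      · exact Or.inl ⟨rfl, hsubS hc⟩
    · rcases hbc with ⟨rfl, _⟩ | ⟨hc, hbc⟩
      · exact absurd rfl hb.2
      · have hbc' : b ∈ compOf G A c := (Dmem c hc b c hbc).1
        have : compOf G A b = compOf G A c := compOf_eq_of_mem hbc'
        rw [this] at hab
        exact Or.inr ⟨hc, (Dspec _).1.trans a b c hab hbc⟩
  · -- antisymm
    rintro a b (⟨rfl, hb⟩ | ⟨hb, hab⟩) hba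
    · rcases hba with ⟨rfl, _⟩ | ⟨ha, hba⟩
      · rfl
      · exact absurd rfl ha.2
    · rcases hba with ⟨rfl, _⟩ | ⟨ha, hba⟩
      · exact absurd rfl hb.2
      · have heq : compOf G A a = compOf G A b :=
          compOf_eq_of_mem ((Dmem b hb a b hab).1)
        rw [← heq] at hab
        exact (Dspec (compOf G A a)).1.antisymm a b hab hba
  · -- chain
    rintro a b v (⟨rfl, hv⟩ | ⟨hv, hav⟩) hbv
    · rcases hbv with ⟨rfl, _⟩ | ⟨hv', hbv⟩
      · exact Or.inl (Or.inl ⟨rfl, huS⟩)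
      · exact Or.inl (Or.inl ⟨rfl, hcompS hv' (Dmem v hv' b v hbv).1⟩)
    · rcases hbv with ⟨rfl, _⟩ | ⟨hv', hbv⟩
      · exact Or.inr (Or.inl ⟨rfl, hcompS hv (Dmem v hv a v hav).1⟩)
      · rcases (Dspec (compOf G A v)).1.chain a b v hav hbv with h | h
        · have hbC : b ∈ compOf G A v := (Dmem v hv' b v hbv).1
          have hbA : b ∈ A := compOf_subset hbC
          have : compOf G A b = compOf G A v := compOf_eq_of_mem hbC
          exact Or.inl (Or.inr ⟨hbA, this ▸ h⟩)
        · have haC : a ∈ compOf G A v := (Dmem v hv a v hav).1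
          have haA : a ∈ A := compOf_subset haC
          have : compOf G A a = compOf G A v := compOf_eq_of_mem haC
          exact Or.inr (Or.inr ⟨haA, this ▸ h⟩)
  · -- covers
    intro x y hx hy hadj
    by_cases hxu : x = u
    · exact Or.inl (Or.inl ⟨hxu, hy⟩)
    by_cases hyu : y = u
    · exact Or.inr (Or.inl ⟨hyu, hx⟩)
    have hxA : x ∈ A := ⟨hx, hxu⟩
    have hyA : y ∈ A := ⟨hy, hyu⟩
    have hxC : x ∈ compOf G A y := mem_compOf_of_adj hxA hyA hadj
    have hyC : y ∈ compOf G A y := mem_compOf_self hyA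
    rcases (Dspec (compOf G A y)).1.covers x y hxC hyC hadj with h | h
    · exact Or.inl (Or.inr ⟨hyA, h⟩)
    · have : compOf G A x = compOf G A y := compOf_eq_of_adj hxA hyA hadj
      exact Or.inr (Or.inr ⟨hxA, this ▸ h⟩)
  · -- depth
    apply ancDepth_le
    intro b hb
    by_cases hbu : b = u
    · subst hbu
      have : {a | anc a b} = {b} := by
        ext a
        simp only [Set.mem_setOf_eq, Set.mem_singleton_iff, hanc]
        constructor
        · rintro (⟨rfl, _⟩ | ⟨hb', _⟩)
          · rfl
          · exact absurd rfl hb'.2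
        · rintro rfl; exact Or.inl ⟨rfl, hb⟩
      rw [this, Set.ncard_singleton]
      exact one_le_td ⟨b, hb⟩
    · have hbA : b ∈ A := ⟨hb, hbu⟩
      have hsub : {a | anc a b} ⊆ insert u {a | Dm (compOf G A b) a b} := by
        rintro a (⟨rfl, _⟩ | ⟨_, h⟩)
        · exact Set.mem_insert _ _
        · exact Set.mem_insert_of_mem _ h
      have h1 : Set.ncard {a | anc a b} ≤ 1 + Set.ncard {a | Dm (compOf G A b) a b} := by
        refine le_trans (Set.ncard_le_ncard hsub (Set.toFinite _)) ?_
        rw [add_comm]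
        exact Set.ncard_insert_le _ _
      have h2 : Set.ncard {a | Dm (compOf G A b) a b} ≤ td G (compOf G A b) := by
        rw [← (Dspec (compOf G A b)).2]
        exact le_ancDepth (mem_compOf_self hbA)
      have h3 := hopt b hbA
      omega
  · -- root
    intro b hb
    exact Or.inl ⟨rfl, hb⟩

end Swap

section Swap2
variable {V : Type*} [Fintype V] [LinearOrder V] {G : SimpleGraph V}

lemma optRoot_swap {S : Set V} {u w : V} (hu : OptRoot G S u) (hwS : w ∈ S)
    (hdom : Dominates G w u) : OptRoot G S w := by
  classical
  obtain ⟨anc, hD, hdep, hroot⟩ := optRoot_decomp hu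
  have huS : u ∈ S := hu.1
  set σ : Equiv.Perm V := Equiv.swap u w with hσ
  have hσσ : ∀ x, σ (σ x) = x := fun x => Equiv.swap_apply_self u w x
  have hσS : ∀ x, σ x ∈ S ↔ x ∈ S := by
    intro x
    by_cases hxu : x = u
    · subst hxu; rw [Equiv.swap_apply_left]; exact ⟨fun _ => huS, fun _ => hwS⟩
    by_cases hxw : x = w
    · subst hxw; rw [Equiv.swap_apply_right]; exact ⟨fun _ => hwS, fun _ => huS⟩
    · rw [Equiv.swap_apply_of_ne_of_ne hxu hxw]
  set anc' : V → V → Prop := fun a b => anc (σ a) (σ b) with hanc'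
  have hsubN : G.neighborSet u \ {w} ⊆ G.neighborSet w \ {u} := dominates_subset hdom
  have hD' : IsDecomp G S anc' := by
    constructor
    · intro a b h
      obtain ⟨h1, h2⟩ := hD.mem _ _ h
      exact ⟨(hσS a).mp h1, (hσS b).mp h2⟩
    · intro v hv; exact hD.refl (σ v) ((hσS v).mpr hv)
    · intro a b c h1 h2; exact hD.trans _ _ _ h1 h2
    · intro a b h1 h2
      have := hD.antisymm _ _ h1 h2
      have := congrArg σ this
      rwa [hσσ, hσσ] at this
    · intro a b v h1 h2; exact hD.chain _ _ _ h1 h2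
    · intro x y hx hy hadj
      by_cases hxw : x = w
      · refine Or.inl ?_
        show anc (σ x) (σ y)
        rw [hxw, Equiv.swap_apply_right]
        exact hroot (σ y) ((hσS y).mpr hy)
      by_cases hyw : y = w
      · refine Or.inr ?_
        show anc (σ y) (σ x)
        rw [hyw, Equiv.swap_apply_right]
        exact hroot (σ x) ((hσS x).mpr hx)
      by_cases hxu : x = u
      · have hyu : y ≠ u := fun h => hadj.ne (hxu.trans h.symm)
        have h1 : y ∈ G.neighborSet u \ {w} :=
          ⟨by rw [SimpleGraph.mem_neighborSet, ← hxu]; exact hadj, by simp [hyw]⟩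
        have hadj' : G.Adj w y := (hsubN h1).1
        rcases hD.covers w y hwS hy hadj' with h | h
        · refine Or.inl ?_
          show anc (σ x) (σ y)
          rwa [hxu, Equiv.swap_apply_left, Equiv.swap_apply_of_ne_of_ne hyu hyw]
        · refine Or.inr ?_
          show anc (σ y) (σ x)
          rwa [hxu, Equiv.swap_apply_left, Equiv.swap_apply_of_ne_of_ne hyu hyw]
      by_cases hyu : y = u
      · have h1 : x ∈ G.neighborSet u \ {w} :=
          ⟨by rw [SimpleGraph.mem_neighborSet, ← hyu]; exact hadj.symm, by simp [hxw]⟩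
        have hadj' : G.Adj w x := (hsubN h1).1
        rcases hD.covers w x hwS hx hadj' with h | h
        · refine Or.inr ?_
          show anc (σ y) (σ x)
          rwa [hyu, Equiv.swap_apply_left, Equiv.swap_apply_of_ne_of_ne hxu hxw]
        · refine Or.inl ?_
          show anc (σ x) (σ y)
          rwa [hyu, Equiv.swap_apply_left, Equiv.swap_apply_of_ne_of_ne hxu hxw]
      · have hx' : σ x = x := Equiv.swap_apply_of_ne_of_ne hxu hxw
        have hy' : σ y = y := Equiv.swap_apply_of_ne_of_ne hyu hyw
        show anc (σ x) (σ y) ∨ anc (σ y) (σ x)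
        rw [hx', hy']
        exact hD.covers x y hx hy hadj
  have hdep' : ancDepth anc' S = ancDepth anc S := by
    have hset : ∀ b, {a | anc' a b} = σ '' {a | anc a (σ b)} := by
      intro b
      ext a
      simp only [Set.mem_setOf_eq, Set.mem_image]
      constructor
      · intro h; exact ⟨σ a, h, hσσ a⟩
      · rintro ⟨x, hx, rfl⟩; show anc (σ (σ x)) (σ b); rwa [hσσ]
    have hcard : ∀ b, Set.ncard {a | anc' a b} = Set.ncard {a | anc a (σ b)} := by
      intro b
      rw [hset b, Set.ncard_image_of_injective _ σ.injective]
    unfold ancDepth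
    congr 1
    ext d
    simp only [Set.mem_image]
    constructor
    · rintro ⟨b, hb, rfl⟩
      exact ⟨σ b, (hσS b).mpr hb, (hcard b).symm⟩
    · rintro ⟨b, hb, rfl⟩
      refine ⟨σ b, (hσS b).mpr hb, ?_⟩
      rw [hcard (σ b), hσσ]
  have hroot' : ∀ b ∈ S, anc' w b := by
    intro b hb
    show anc (σ w) (σ b)
    rw [Equiv.swap_apply_right]
    exact hroot (σ b) ((hσS b).mpr hb)
  refine ⟨hwS, ?_⟩
  intro c hc
  have := restrict_decomp hD' hroot' hc
  rw [hdep'] at this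
  omega

end Swap2

section Measure
variable {V : Type*} [Fintype V] [LinearOrder V] {G : SimpleGraph V}

noncomputable def meas (G : SimpleGraph V) (v : V) : Lex (ℕ × V) :=
  toLex ((G.neighborSet v).ncard, v)

lemma dominates_meas {v w : V} (h : Dominates G v w) : meas G w < meas G v := by
  obtain ⟨hne, hcase⟩ := h
  have hsymm : v ∈ G.neighborSet w ↔ w ∈ G.neighborSet v := by
    simp only [SimpleGraph.mem_neighborSet]
    exact ⟨fun h => h.symm, fun h => h.symm⟩
  have key : ∀ (a b : V), a ≠ b →
      Set.ncard (G.neighborSet a \ {b}) + (if b ∈ G.neighborSet a then 1 else 0)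
        = Set.ncard (G.neighborSet a) := by
    intro a b hab
    by_cases hb : b ∈ G.neighborSet a
    · simp only [hb, if_true]
      exact Set.ncard_diff_singleton_add_one hb (Set.toFinite _)
    · simp only [hb, if_false, add_zero]
      rw [Set.diff_singleton_eq_self hb]
  have k1 := key w v hne.symm
  have k2 := key v w hne
  have hiff : (v ∈ G.neighborSet w) = (w ∈ G.neighborSet v) := propext hsymm
  rw [meas, meas, Prod.Lex.lt_iff, ofLex_toLex, ofLex_toLex]
  have hk12 : ∀ _ : Unit, True := fun _ => trivial
  by_cases hm : w ∈ G.neighborSet v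
  case pos =>
    rw [if_pos hm] at k2
    rw [if_pos (hsymm.mpr hm)] at k1
    rcases hcase with hss | ⟨heq, hlt⟩
    · left
      have := Set.ncard_lt_ncard hss (Set.toFinite _)
      omega
    · have heq' : Set.ncard (G.neighborSet v \ {w}) = Set.ncard (G.neighborSet w \ {v}) := by
        rw [heq]
      right
      exact ⟨by omega, hlt⟩
  case neg =>
    rw [if_neg hm] at k2
    rw [if_neg (fun h => hm (hsymm.mp h))] at k1
    rcases hcase with hss | ⟨heq, hlt⟩
    · left
      have := Set.ncard_lt_ncard hss (Set.toFinite _)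
      omega
    · have heq' : Set.ncard (G.neighborSet v \ {w}) = Set.ncard (G.neighborSet w \ {v}) := by
        rw [heq]
      right
      exact ⟨by omega, hlt⟩

lemma exists_max_optRoot {S : Set V} (hne : S.Nonempty)
    (hconn : ∀ x (hx : x ∈ S) y (hy : y ∈ S), (G.induce S).Reachable ⟨x, hx⟩ ⟨y, hy⟩) :
    ∃ r, OptRoot G S r ∧ ∀ x ∈ S, ¬ Dominates G x r := by
  have hR : {r | OptRoot G S r}.Nonempty := exists_optRoot hne hconn
  obtain ⟨r, hr, hmax⟩ := Set.exists_max_image {r | OptRoot G S r} (meas G)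
    (Set.toFinite _) hR
  refine ⟨r, hr, ?_⟩
  intro x hx hdx
  have hxR : OptRoot G S x := optRoot_swap hr hx hdx
  have h1 := hmax x hxR
  have h2 := dominates_meas hdx
  exact absurd h1 (not_le.mpr h2)

end Measure

section Main
variable {V : Type*} [Fintype V] [LinearOrder V] {G : SimpleGraph V}

lemma main_induction (n : ℕ) : ∀ (S : Set V), S.ncard ≤ n → S.Nonempty →
    (∀ x (hx : x ∈ S) y (hy : y ∈ S), (G.induce S).Reachable ⟨x, hx⟩ ⟨y, hy⟩) →
    ∃ r anc, IsElimTree G S r anc ∧ ancDepth anc S = td G S ∧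
      ∀ v w, anc w v → ¬ Dominates G v w := by
  induction n with
  | zero =>
      intro S hcard hne _
      have : 0 < S.ncard := (Set.ncard_pos (Set.toFinite S)).mpr hne
      omega
  | succ n ih =>
      intro S hcard hne hconn
      obtain ⟨r, hropt, hrmax⟩ := exists_max_optRoot hne hconn
      have hrS : r ∈ S := hropt.1
      by_cases hS : S = {r}
      · subst hS
        refine ⟨r, fun a b => a = r ∧ b = r, IsElimTree.single r, ?_, ?_⟩
        · have h1 : ancDepth (fun a b => a = r ∧ b = r) {r} = 1 := by
            unfold ancDepth
            rw [Set.image_singleton]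
            have : {a | a = r ∧ r = r} = {r} := by ext a; simp
            rw [this, Set.ncard_singleton]
            exact csSup_singleton 1
          have h2 : td G {r} ≤ 1 := by
            have := td_le (IsElimTree.single (G := G) r).isDecomp.1
            omega
          have h3 : 1 ≤ td G {r} := one_le_td ⟨r, rfl⟩
          omega
        · rintro v w ⟨rfl, rfl⟩ hdom
          exact hdom.1 rfl
      · set A : Set V := S \ {r} with hA
        have hAcard : A.ncard ≤ n := by
          have h' : A.ncard + 1 = S.ncard :=
            Set.ncard_diff_singleton_add_one hrS (Set.toFinite S)
          omega
        have hCsub : ∀ c, compOf G A c ⊆ A := fun c => compOf_subset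
        have hCcard : ∀ c, (compOf G A c).ncard ≤ n := fun c =>
          le_trans (Set.ncard_le_ncard (hCsub c) (Set.toFinite A)) hAcard
        set P : Set V → Prop := fun C => ∃ p : V × (V → V → Prop),
          IsElimTree G C p.1 p.2 ∧ ancDepth p.2 C = td G C ∧
          ∀ v w, p.2 w v → ¬ Dominates G v w with hP
        set F : Set V → V × (V → V → Prop) :=
          fun C => if h : P C then h.choose else (r, fun _ _ => False) with hF
        set root : V → V := fun c => (F (compOf G A c)).1 with hroot
        set sub : V → V → V → Prop := fun c => (F (compOf G A c)).2 with hsub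
        have hPC : ∀ c ∈ A, P (compOf G A c) := by
          intro c hc
          obtain ⟨r', anc', h1, h2, h3⟩ := ih (compOf G A c) (hCcard c)
            ⟨c, mem_compOf_self hc⟩
            (fun x hx y hy => reachable_in_compOf hx hy)
          exact ⟨(r', anc'), h1, h2, h3⟩
        have hFspec : ∀ c ∈ A, IsElimTree G (compOf G A c) (root c) (sub c) ∧
            ancDepth (sub c) (compOf G A c) = td G (compOf G A c) ∧
            ∀ v w, sub c w v → ¬ Dominates G v w := by
          intro c hc
          have h := hPC c hc
          have hFe : F (compOf G A c) = h.choose := dif_pos h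
          have hspec := h.choose_spec
          rw [← hFe] at hspec
          exact ⟨hspec.1, hspec.2.1, hspec.2.2⟩
        have hcong : ∀ c ∈ A, ∀ c' ∈ A, compOf G A c = compOf G A c' →
            root c = root c' ∧ sub c = sub c' := by
          intro c _ c' _ heq
          constructor
          · show (F (compOf G A c)).1 = (F (compOf G A c')).1; rw [heq]
          · show (F (compOf G A c)).2 = (F (compOf G A c')).2; rw [heq]
        set anc : V → V → Prop :=
          fun a b => (a = r ∧ b ∈ S) ∨ ∃ c ∈ A, sub c a b with hanc
        have htree : IsElimTree G S r anc :=
          IsElimTree.node S r hrS hS root sub (fun c hc => (hFspec c hc).1) hcong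
            anc (fun a b => Iff.rfl)
        have hdge : td G S ≤ ancDepth anc S := td_le htree.isDecomp.1
        have hdle : ancDepth anc S ≤ td G S := by
          apply ancDepth_le
          intro b hb
          by_cases hbr : b = r
          · subst hbr
            have : {a | anc a b} = {b} := by
              ext a
              simp only [Set.mem_setOf_eq, Set.mem_singleton_iff]
              constructor
              · rintro (⟨rfl, _⟩ | ⟨c, hc, h⟩)
                · rfl
                · have := ((hFspec c hc).1.isDecomp.1.mem a b h).2
                  exact absurd ((hCsub c) this).2 (by simp)
              · rintro rfl; exact Or.inl ⟨rfl, hrS⟩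
            rw [this, Set.ncard_singleton]
            exact one_le_td hne
          · have hbA : b ∈ A := ⟨hb, hbr⟩
            have hsubset : {a | anc a b} ⊆ insert r {a | sub b a b} := by
              rintro a (⟨rfl, _⟩ | ⟨c, hc, h⟩)
              · exact Set.mem_insert _ _
              · have hbC : b ∈ compOf G A c := ((hFspec c hc).1.isDecomp.1.mem a b h).2
                have heq : compOf G A b = compOf G A c := compOf_eq_of_mem hbC
                have := (hcong c hc b hbA heq.symm).2
                rw [this] at h
                exact Set.mem_insert_of_mem _ h
            have h1 : Set.ncard {a | anc a b} ≤ Set.ncard {a | sub b a b} + 1 :=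
              le_trans (Set.ncard_le_ncard hsubset (Set.toFinite _)) (Set.ncard_insert_le _ _)
            have h2 : Set.ncard {a | sub b a b} ≤ td G (compOf G A b) := by
              rw [← (hFspec b hbA).2.1]
              exact le_ancDepth (mem_compOf_self hbA)
            have h3 : td G (compOf G A b) + 1 ≤ td G S := hropt.2 b hbA
            omega
        refine ⟨r, anc, htree, le_antisymm hdle hdge, ?_⟩
        rintro v w (⟨rfl, hv⟩ | ⟨c, hc, h⟩) hdom
        · exact hrmax v hv hdom
        · exact (hFspec c hc).2.2 v w h hdom

end Main

section Final
variable {V : Type*} [Fintype V] [LinearOrder V] {G : SimpleGraph V}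

lemma td_univ_eq : td G Set.univ = treedepth G := by
  unfold td treedepth
  congr 1
  ext d
  constructor
  · rintro ⟨anc, hD, rfl⟩
    exact ⟨⟨anc, fun v => hD.refl v trivial, hD.trans, hD.antisymm, hD.chain,
      fun u v h => hD.covers u v trivial trivial h⟩, rfl⟩
  · rintro ⟨F, rfl⟩
    exact ⟨F.anc, ⟨fun a b _ => ⟨trivial, trivial⟩, fun v _ => F.refl v, F.trans,
      F.antisymm, F.chain, fun u v _ _ h => F.covers u v h⟩, rfl⟩

end Final

/-- For a connected graph there is a minimum-depth elimination tree in which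
no vertex dominates any of its ancestors. -/
theorem elimTree_no_dominated_ancestor {V : Type*} [Fintype V] [LinearOrder V]
    {G : SimpleGraph V} (hG : G.Connected) :
    ∃ (r : V) (anc : V → V → Prop),
      IsElimTree G Set.univ r anc ∧ ancDepth anc Set.univ = treedepth G ∧
      ∀ v w, anc w v → ¬ Dominates G v w := by
  have hne : (Set.univ : Set V).Nonempty := by
    have : Nonempty V := hG.nonempty
    obtain ⟨x⟩ := this
    exact ⟨x, trivial⟩
  have hconn : ∀ x (hx : x ∈ (Set.univ : Set V)) y (hy : y ∈ (Set.univ : Set V)),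
      (G.induce Set.univ).Reachable ⟨x, hx⟩ ⟨y, hy⟩ := by
    intro x hx y hy
    have h := hG.preconnected x y
    have := SimpleGraph.Reachable.map (G.induceUnivIso).symm.toHom h
    convert this using 2 <;> rfl
  obtain ⟨r, anc, h1, h2, h3⟩ := main_induction (Fintype.card V) Set.univ
    (by rw [Set.ncard_univ, Nat.card_eq_fintype_card]) hne hconn
  exact ⟨r, anc, h1, h2.trans td_univ_eq, h3⟩
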